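/- arXiv:1402.3113 — 2 statements merged into one kernel-verified Lean document; each statement's English description precedes it below -/
import Mathlib

section
/- Fix s>1, h>0 and an open set U ⊆ ℝ^d, and let φ ∈ D^{(s)}_{L^∞,h}(U). Then for every ε>0 there exist a compact set K ⊂ U and k ∈ ℤ₊ such that sup_{α∈ℕ^d} sup_{x∈U\K} h^{|α|}|D^αφ(x)|/α!^s ≤ ε and sup_{|α|≥k} h^{|α|}‖D^αφ‖_{L^∞(U)}/α!^s ≤ ε. -/
open MeasureTheory Filter Set
open scoped BigOperators ENNReal NNReal Topology

noncomputable section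

/-- The order `|α|` of a multi-index `α`. -/
def mOrder {d : ℕ} (α : Fin d → ℕ) : ℕ := ∑ i, α i

/-- The factorial `α!` of a multi-index `α`. -/
def mFact {d : ℕ} (α : Fin d → ℕ) : ℕ := ∏ i, Nat.factorial (α i)

variable {d : ℕ} {F : Type*} [NormedAddCommGroup F] [NormedSpace ℝ F]

/-- First-order partial derivative `∂_i`. -/
def pd (i : Fin d) (f : (Fin d → ℝ) → F) : (Fin d → ℝ) → F :=
  fun x => fderiv ℝ f x (Pi.single i 1)

/-- Iterated partial derivative `∂_i^n`. -/
def pdPow (i : Fin d) : ℕ → ((Fin d → ℝ) → F) → ((Fin d → ℝ) → F)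
  | 0 => id
  | n + 1 => fun f => pd i (pdPow i n f)

/-- Iterated partial derivative `∂^α` for a multi-index `α`. -/
def pdm (α : Fin d → ℕ) (f : (Fin d → ℝ) → F) : (Fin d → ℝ) → F :=
  (List.finRange d).foldr (fun i g => pdPow i (α i) g) f

/-- The operator `D^α = i^{-|α|} ∂^α` for complex-valued functions. -/
def Dm (α : Fin d → ℕ) (f : (Fin d → ℝ) → ℂ) : (Fin d → ℝ) → ℂ :=
  fun x => (-Complex.I) ^ (mOrder α) * pdm α f x

/-- `φ` is a Beurling–Gevrey test function of class `(s)` on `U`. -/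
def IsGevreyTest (s : ℝ) (U : Set (Fin d → ℝ)) (φ : (Fin d → ℝ) → F) : Prop :=
  ContDiff ℝ (⊤ : ℕ∞) φ ∧ HasCompactSupport φ ∧ tsupport φ ⊆ U ∧
    ∀ h : ℝ, 0 < h → ∃ C : ℝ, ∀ (α : Fin d → ℕ) (x : Fin d → ℝ),
      ‖pdm α φ x‖ ≤ C * h ^ (mOrder α) * (mFact α : ℝ) ^ s

/-- The `ℓ^p`-type norm of a family of extended reals (sup for `p = ∞`). -/
def seqLpNorm {ι : Type*} (p : ℝ≥0∞) (w : ι → ℝ≥0∞) : ℝ≥0∞ :=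
  if p = ∞ then ⨆ i, w i else (∑' i, (w i) ^ p.toReal) ^ (1 / p.toReal)

/-- The norm of the space `D^s_{L^p,h}(U)`:
`(∑_α h^{p|α|} ‖D^α φ‖_{L^p(U)}^p / α!^{ps})^{1/p}` (sup over `α` when `p = ∞`). -/
def gNorm (s h : ℝ) (p : ℝ≥0∞) (U : Set (Fin d → ℝ)) (φ : (Fin d → ℝ) → F) : ℝ≥0∞ :=
  seqLpNorm p (fun α : Fin d → ℕ =>
    ENNReal.ofReal (h ^ (mOrder α) / (mFact α : ℝ) ^ s) *
      eLpNorm (pdm α φ) p (volume.restrict U))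

/-- Membership in `D^{(s)}_{L^p,h}(U)`, the closure of `D^{(s)}(U)` in `D^s_{L^p,h}(U)`. -/
def MemD (s h : ℝ) (p : ℝ≥0∞) (U : Set (Fin d → ℝ)) (φ : (Fin d → ℝ) → F) : Prop :=
  ContDiffOn ℝ (⊤ : ℕ∞) φ U ∧ gNorm s h p U φ < ⊤ ∧
    ∀ ε : ℝ, 0 < ε → ∃ ψ : (Fin d → ℝ) → F, IsGevreyTest s U ψ ∧
      gNorm s h p U (φ - ψ) < ENNReal.ofReal ε

/-- Membership in `Ḃ^{(s)}(U)`, the closure of `D^{(s)}(U)` with respect to the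
family of norms `p_h`, `h > 0` (the norms being directed, closure with respect to the
whole family amounts to approximability in each norm separately). -/
def MemBdot (s : ℝ) (U : Set (Fin d → ℝ)) (φ : (Fin d → ℝ) → F) : Prop :=
  ContDiffOn ℝ (⊤ : ℕ∞) φ U ∧ (∀ h : ℝ, 0 < h → gNorm s h ∞ U φ < ⊤) ∧
    ∀ h ε : ℝ, 0 < h → 0 < ε → ∃ ψ : (Fin d → ℝ) → F, IsGevreyTest s U ψ ∧
      gNorm s h ∞ U (φ - ψ) < ENNReal.ofReal ε

/-- A continuous linear functional on the Banach space `D^{(s)}_{L^q,h}(U)`. -/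
def IsDualD (s h : ℝ) (q : ℝ≥0∞) (U : Set (Fin d → ℝ)) (T : ((Fin d → ℝ) → ℂ) → ℂ) : Prop :=
  (∀ φ ψ, MemD s h q U φ → MemD s h q U ψ → T (φ + ψ) = T φ + T ψ) ∧
  (∀ (c : ℂ) (φ), MemD s h q U φ → T (c • φ) = c * T φ) ∧
  ∃ M : ℝ, ∀ φ, MemD s h q U φ → ‖T φ‖ ≤ M * (gNorm s h q U φ).toReal

/-- A continuous linear map from `Ḃ^{(s)}(U)` into a Banach space `E` (over `ℂ`). -/
def IsContLinBdot (s : ℝ) (U : Set (Fin d → ℝ)) {E : Type*} [NormedAddCommGroup E]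
    [NormedSpace ℂ E] (f : ((Fin d → ℝ) → ℂ) → E) : Prop :=
  (∀ φ ψ, MemBdot s U φ → MemBdot s U ψ → f (φ + ψ) = f φ + f ψ) ∧
  (∀ (c : ℂ) (φ), MemBdot s U φ → f (c • φ) = c • f φ) ∧
  ∃ h M : ℝ, 0 < h ∧ ∀ φ, MemBdot s U φ → ‖f φ‖ ≤ M * (gNorm s h ∞ U φ).toReal

section AuxLemmas

variable {d : ℕ}

lemma pd_congrOn {f g : (Fin d → ℝ) → ℂ} {V : Set (Fin d → ℝ)} (hV : IsOpen V)
    (hfg : Set.EqOn f g V) (i : Fin d) : Set.EqOn (pd i f) (pd i g) V := by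
  intro x hx
  have h1 : f =ᶠ[𝓝 x] g := by
    filter_upwards [hV.mem_nhds hx] with y hy using hfg hy
  simp only [pd, h1.fderiv_eq]

lemma pd_contDiffOn {f : (Fin d → ℝ) → ℂ} {U : Set (Fin d → ℝ)} (hU : IsOpen U)
    (hf : ContDiffOn ℝ (⊤ : ℕ∞) f U) (i : Fin d) : ContDiffOn ℝ (⊤ : ℕ∞) (pd i f) U := by
  have h1 : ContDiffOn ℝ (⊤ : ℕ∞) (fderiv ℝ f) U := hf.fderiv_of_isOpen hU (by exact_mod_cast le_top)
  exact (ContinuousLinearMap.apply ℝ ℂ ((Pi.single i 1) : Fin d → ℝ)).contDiff.comp_contDiffOn h1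

lemma pd_subOn {f g : (Fin d → ℝ) → ℂ} {U : Set (Fin d → ℝ)} (hU : IsOpen U)
    (hf : ContDiffOn ℝ (⊤ : ℕ∞) f U) (hg : ContDiffOn ℝ (⊤ : ℕ∞) g U) (i : Fin d) :
    Set.EqOn (pd i (f - g)) (pd i f - pd i g) U := by
  intro x hx
  have hfd : DifferentiableAt ℝ f x :=
    (hf.differentiableOn (by simp)).differentiableAt (hU.mem_nhds hx)
  have hgd : DifferentiableAt ℝ g x :=
    (hg.differentiableOn (by simp)).differentiableAt (hU.mem_nhds hx)
  have hsub : fderiv ℝ (f - g) x = fderiv ℝ f x - fderiv ℝ g x := fderiv_sub hfd hgd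
  simp [pd, hsub]

lemma pd_zeroOn {f : (Fin d → ℝ) → ℂ} {V : Set (Fin d → ℝ)} (hV : IsOpen V)
    (hf : Set.EqOn f 0 V) (i : Fin d) : Set.EqOn (pd i f) 0 V := by
  intro x hx
  have h1 : f =ᶠ[𝓝 x] (fun _ => 0) := by
    filter_upwards [hV.mem_nhds hx] with y hy using hf hy
  simp [pd, h1.fderiv_eq]

lemma pdPow_contDiffOn {U : Set (Fin d → ℝ)} (hU : IsOpen U) {f : (Fin d → ℝ) → ℂ}
    (hf : ContDiffOn ℝ (⊤ : ℕ∞) f U) (i : Fin d) (n : ℕ) :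
    ContDiffOn ℝ (⊤ : ℕ∞) (pdPow i n f) U := by
  induction n with
  | zero => exact hf
  | succ n ih => exact pd_contDiffOn hU ih i

lemma pdPow_congrOn {f g : (Fin d → ℝ) → ℂ} {V : Set (Fin d → ℝ)} (hV : IsOpen V)
    (hfg : Set.EqOn f g V) (i : Fin d) (n : ℕ) :
    Set.EqOn (pdPow i n f) (pdPow i n g) V := by
  induction n with
  | zero => exact hfg
  | succ n ih => exact pd_congrOn hV ih i

lemma pdPow_zeroOn {f : (Fin d → ℝ) → ℂ} {V : Set (Fin d → ℝ)} (hV : IsOpen V)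
    (hf : Set.EqOn f 0 V) (i : Fin d) (n : ℕ) : Set.EqOn (pdPow i n f) 0 V := by
  induction n with
  | zero => exact hf
  | succ n ih => exact pd_zeroOn hV ih i

lemma pdPow_subOn {f g : (Fin d → ℝ) → ℂ} {U : Set (Fin d → ℝ)} (hU : IsOpen U)
    (hf : ContDiffOn ℝ (⊤ : ℕ∞) f U) (hg : ContDiffOn ℝ (⊤ : ℕ∞) g U) (i : Fin d) (n : ℕ) :
    Set.EqOn (pdPow i n (f - g)) (pdPow i n f - pdPow i n g) U := by
  induction n with
  | zero => exact fun x _ => rfl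
  | succ n ih =>
    have h1 := pd_congrOn hU ih i
    have h2 := pd_subOn hU (pdPow_contDiffOn hU hf i n) (pdPow_contDiffOn hU hg i n) i
    exact h1.trans h2

lemma foldr_contDiffOn {U : Set (Fin d → ℝ)} (hU : IsOpen U) (α : Fin d → ℕ)
    (l : List (Fin d)) {f : (Fin d → ℝ) → ℂ} (hf : ContDiffOn ℝ (⊤ : ℕ∞) f U) :
    ContDiffOn ℝ (⊤ : ℕ∞) (l.foldr (fun i g => pdPow i (α i) g) f) U := by
  induction l with
  | nil => exact hf
  | cons i l ih => exact pdPow_contDiffOn hU ih i (α i)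

lemma foldr_zeroOn {V : Set (Fin d → ℝ)} (hV : IsOpen V) (α : Fin d → ℕ)
    (l : List (Fin d)) {f : (Fin d → ℝ) → ℂ} (hf : Set.EqOn f 0 V) :
    Set.EqOn (l.foldr (fun i g => pdPow i (α i) g) f) 0 V := by
  induction l with
  | nil => exact hf
  | cons i l ih => exact pdPow_zeroOn hV ih i (α i)

lemma foldr_subOn {U : Set (Fin d → ℝ)} (hU : IsOpen U) (α : Fin d → ℕ)
    (l : List (Fin d)) {f g : (Fin d → ℝ) → ℂ} (hf : ContDiffOn ℝ (⊤ : ℕ∞) f U)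
    (hg : ContDiffOn ℝ (⊤ : ℕ∞) g U) :
    Set.EqOn (l.foldr (fun i g => pdPow i (α i) g) (f - g))
      (l.foldr (fun i g => pdPow i (α i) g) f - l.foldr (fun i g => pdPow i (α i) g) g) U := by
  induction l with
  | nil => exact fun x _ => rfl
  | cons i l ih =>
    have h1 := pdPow_congrOn hU ih i (α i)
    have h2 := pd_subOn hU (foldr_contDiffOn hU α l hf) (foldr_contDiffOn hU α l hg)
    have h2' := pdPow_subOn hU (foldr_contDiffOn hU α l hf) (foldr_contDiffOn hU α l hg) i (α i)
    exact h1.trans h2'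

lemma pdm_contDiffOn {U : Set (Fin d → ℝ)} (hU : IsOpen U) {f : (Fin d → ℝ) → ℂ}
    (hf : ContDiffOn ℝ (⊤ : ℕ∞) f U) (α : Fin d → ℕ) :
    ContDiffOn ℝ (⊤ : ℕ∞) (pdm α f) U :=
  foldr_contDiffOn hU α _ hf

lemma pdm_zeroOn {V : Set (Fin d → ℝ)} (hV : IsOpen V) {f : (Fin d → ℝ) → ℂ}
    (hf : Set.EqOn f 0 V) (α : Fin d → ℕ) : Set.EqOn (pdm α f) 0 V :=
  foldr_zeroOn hV α _ hf

lemma pdm_subOn {U : Set (Fin d → ℝ)} (hU : IsOpen U) {f g : (Fin d → ℝ) → ℂ}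
    (hf : ContDiffOn ℝ (⊤ : ℕ∞) f U) (hg : ContDiffOn ℝ (⊤ : ℕ∞) g U) (α : Fin d → ℕ) :
    Set.EqOn (pdm α (f - g)) (pdm α f - pdm α g) U :=
  foldr_subOn hU α _ hf hg

lemma mFact_pos (α : Fin d → ℕ) : 0 < mFact α :=
  Finset.prod_pos fun i _ => Nat.factorial_pos _

lemma pointwiseBound {g : (Fin d → ℝ) → ℂ} {U : Set (Fin d → ℝ)} (hU : IsOpen U)
    (hg : ContinuousOn g U) {C : ℝ} (hC : 0 ≤ C)
    (hle : eLpNorm g ∞ (volume.restrict U) ≤ ENNReal.ofReal C)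
    {x : Fin d → ℝ} (hx : x ∈ U) : ‖g x‖ ≤ C := by
  by_contra hcon
  push_neg at hcon
  have hVo : IsOpen (U ∩ (fun y => ‖g y‖) ⁻¹' Set.Ioi C) :=
    hg.norm.isOpen_inter_preimage hU isOpen_Ioi
  have hxV : x ∈ U ∩ (fun y => ‖g y‖) ⁻¹' Set.Ioi C := ⟨hx, hcon⟩
  have hae : ∀ᵐ y ∂(volume.restrict U), (‖g y‖₊ : ℝ≥0∞) ≤ ENNReal.ofReal C := by
    refine (enorm_ae_le_eLpNormEssSup g _).mono fun y hy => hy.trans ?_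
    rwa [← eLpNorm_exponent_top]
  have hnull : (volume.restrict U) {y | ¬ ((‖g y‖₊ : ℝ≥0∞) ≤ ENNReal.ofReal C)} = 0 :=
    ae_iff.mp hae
  have hVsub : (U ∩ (fun y => ‖g y‖) ⁻¹' Set.Ioi C) ⊆
      {y | ¬ ((‖g y‖₊ : ℝ≥0∞) ≤ ENNReal.ofReal C)} := by
    intro y hy
    simp only [Set.mem_setOf_eq, not_le]
    calc ENNReal.ofReal C < ENNReal.ofReal ‖g y‖ :=
          (ENNReal.ofReal_lt_ofReal_iff_of_nonneg hC).mpr hy.2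
      _ = (‖g y‖₊ : ℝ≥0∞) := ofReal_norm _
  have h0 : (volume.restrict U) (U ∩ (fun y => ‖g y‖) ⁻¹' Set.Ioi C) = 0 :=
    measure_mono_null hVsub hnull
  rw [Measure.restrict_apply hVo.measurableSet,
    Set.inter_eq_self_of_subset_left Set.inter_subset_left] at h0
  exact absurd h0 (hVo.measure_pos volume ⟨x, hxV⟩).ne'

lemma gNorm_pointwise {s h : ℝ} (hs : 1 < s) (hh : 0 < h) {U : Set (Fin d → ℝ)} (hU : IsOpen U)
    {f : (Fin d → ℝ) → ℂ} (hf : ContDiffOn ℝ (⊤ : ℕ∞) f U) {c : ℝ} (hc : 0 ≤ c)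
    (hle : gNorm s h ∞ U f ≤ ENNReal.ofReal c) (α : Fin d → ℕ)
    {x : Fin d → ℝ} (hx : x ∈ U) :
    h ^ mOrder α * ‖pdm α f x‖ / (mFact α : ℝ) ^ s ≤ c := by
  have hfp : (0:ℝ) < (mFact α : ℝ) := Nat.cast_pos.mpr (mFact_pos α)
  have hFs : (0:ℝ) < (mFact α : ℝ) ^ s := Real.rpow_pos_of_pos hfp s
  set r : ℝ := h ^ mOrder α / (mFact α : ℝ) ^ s with hr_def
  have hr : 0 < r := by positivity
  have hterm : ENNReal.ofReal r * eLpNorm (pdm α f) ∞ (volume.restrict U)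
      ≤ ENNReal.ofReal c := by
    refine le_trans ?_ hle
    rw [gNorm, seqLpNorm, if_pos rfl]
    exact le_iSup (fun β : Fin d → ℕ => ENNReal.ofReal (h ^ (mOrder β) / (mFact β : ℝ) ^ s) *
      eLpNorm (pdm β f) ∞ (volume.restrict U)) α
  have hel : eLpNorm (pdm α f) ∞ (volume.restrict U) ≤ ENNReal.ofReal (c / r) := by
    rw [ENNReal.ofReal_div_of_pos hr,
      ENNReal.le_div_iff_mul_le (Or.inl (ENNReal.ofReal_pos.mpr hr).ne')
        (Or.inl ENNReal.ofReal_ne_top), mul_comm]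
    exact hterm
  have hpt : ‖pdm α f x‖ ≤ c / r :=
    pointwiseBound hU (pdm_contDiffOn hU hf α).continuousOn (div_nonneg hc hr.le) hel hx
  have heq : h ^ mOrder α * ‖pdm α f x‖ / (mFact α : ℝ) ^ s = r * ‖pdm α f x‖ := by
    rw [hr_def]; ring
  rw [heq]
  calc r * ‖pdm α f x‖ ≤ r * (c / r) := by
        exact mul_le_mul_of_nonneg_left hpt hr.le
    _ = c := by rw [mul_comm, div_mul_cancel₀ c hr.ne']

lemma norm_Dm (α : Fin d → ℕ) (f : (Fin d → ℝ) → ℂ) (x : Fin d → ℝ) :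
    ‖Dm α f x‖ = ‖pdm α f x‖ := by
  simp [Dm, norm_mul, norm_pow]

end AuxLemmas
/-- Fix `s > 1`, `h > 0` and an open set `U ⊆ ℝ^d`, and let
`φ ∈ D^{(s)}_{L^∞,h}(U)`. Then for every `ε > 0` there exist a compact `K ⊆ U` and
`k ∈ ℤ₊` such that `sup_α sup_{x ∈ U∖K} h^{|α|}|D^αφ(x)|/α!^s ≤ ε` and
`sup_{|α| ≥ k} h^{|α|} ‖D^αφ‖_{L^∞(U)}/α!^s ≤ ε`. -/
theorem statement_8 {d : ℕ} (s h : ℝ) (hs : 1 < s) (hh : 0 < h)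
    (U : Set (Fin d → ℝ)) (hU : IsOpen U)
    (φ : (Fin d → ℝ) → ℂ) (hφ : MemD s h ∞ U φ) :
    ∀ ε : ℝ, 0 < ε → ∃ K : Set (Fin d → ℝ), IsCompact K ∧ K ⊆ U ∧ ∃ k : ℕ, 0 < k ∧
      (∀ (α : Fin d → ℕ), ∀ x ∈ U \ K,
        h ^ mOrder α * ‖Dm α φ x‖ / (mFact α : ℝ) ^ s ≤ ε) ∧
      (∀ (α : Fin d → ℕ), k ≤ mOrder α → ∀ x ∈ U,
        h ^ mOrder α * ‖Dm α φ x‖ / (mFact α : ℝ) ^ s ≤ ε) := by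

  intro ε hε
  obtain ⟨hφs, hφfin, happ⟩ := hφ
  obtain ⟨ψ, ⟨hψsm, hψcs, hψsupp, hψest⟩, hψnorm⟩ := happ (ε/2) (by positivity)
  refine ⟨tsupport ψ, hψcs, hψsupp, ?_⟩
  obtain ⟨C, hC⟩ := hψest (1/(2*h)) (by positivity)
  have hC0 : 0 ≤ C := by
    have h0 := hC (fun _ => 0) (fun _ => 0)
    have : ‖pdm (fun _ : Fin d => 0) ψ (fun _ => 0)‖ ≤ C := by
      simpa [mOrder, mFact, Real.one_rpow] using h0
    exact (norm_nonneg _).trans this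
  obtain ⟨n, hn⟩ := exists_pow_lt_of_lt_one (x := (ε/2)/(C+1)) (y := (1:ℝ)/2)
    (by positivity) (by norm_num)
  -- smoothness of φ - ψ on U
  have hsub : ContDiffOn ℝ (⊤ : ℕ∞) (φ - ψ) U := hφs.sub hψsm.contDiffOn
  -- pointwise bound for φ - ψ on U
  have hdiff : ∀ (α : Fin d → ℕ), ∀ x ∈ U,
      h ^ mOrder α * ‖pdm α (φ - ψ) x‖ / (mFact α : ℝ) ^ s ≤ ε/2 := fun α x hx =>
    gNorm_pointwise hs hh hU hsub (by positivity) hψnorm.le α hx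
  -- decomposition on U
  have hdecomp : ∀ (α : Fin d → ℕ), ∀ x ∈ U,
      pdm α φ x = pdm α (φ - ψ) x + pdm α ψ x := by
    intro α x hx
    have := pdm_subOn hU hφs hψsm.contDiffOn α hx
    simp only [Pi.sub_apply] at this
    rw [this]; ring
  -- bound for ψ
  have hψbd : ∀ (α : Fin d → ℕ), ∀ x : Fin d → ℝ,
      h ^ mOrder α * ‖pdm α ψ x‖ / (mFact α : ℝ) ^ s ≤ C * (1/2) ^ mOrder α := by
    intro α x
    have hfp : (0:ℝ) < (mFact α : ℝ) := Nat.cast_pos.mpr (mFact_pos α)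
    have hFs : (0:ℝ) < (mFact α : ℝ) ^ s := Real.rpow_pos_of_pos hfp s
    rw [div_le_iff₀ hFs]
    have key : h ^ mOrder α * (1/(2*h)) ^ mOrder α = (1/2 : ℝ) ^ mOrder α := by
      rw [← mul_pow]; congr 1; field_simp
    calc h ^ mOrder α * ‖pdm α ψ x‖
        ≤ h ^ mOrder α * (C * (1/(2*h)) ^ mOrder α * (mFact α : ℝ) ^ s) :=
          mul_le_mul_of_nonneg_left (hC α x) (pow_nonneg hh.le _)
      _ = C * (h ^ mOrder α * (1/(2*h)) ^ mOrder α) * (mFact α : ℝ) ^ s := by ring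
      _ = C * (1/2) ^ mOrder α * (mFact α : ℝ) ^ s := by rw [key]
  -- ψ derivatives vanish off the support
  have hψ0 : ∀ (α : Fin d → ℕ), ∀ x ∉ tsupport ψ, pdm α ψ x = 0 := by
    intro α x hx
    have hV : IsOpen (tsupport ψ)ᶜ := (isClosed_tsupport ψ).isOpen_compl
    have hz : Set.EqOn ψ 0 (tsupport ψ)ᶜ := fun y hy =>
      image_eq_zero_of_notMem_tsupport hy
    exact pdm_zeroOn hV hz α hx
  refine ⟨n + 1, n.succ_pos, ?_, ?_⟩
  · intro α x hx
    rw [norm_Dm]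
    have heq : pdm α φ x = pdm α (φ - ψ) x := by
      rw [hdecomp α x hx.1, hψ0 α x hx.2, add_zero]
    rw [heq]
    linarith [hdiff α x hx.1]
  · intro α hα x hx
    rw [norm_Dm]
    have hfp : (0:ℝ) < (mFact α : ℝ) := Nat.cast_pos.mpr (mFact_pos α)
    have hFs : (0:ℝ) < (mFact α : ℝ) ^ s := Real.rpow_pos_of_pos hfp s
    have t3 : ‖pdm α φ x‖ ≤ ‖pdm α (φ - ψ) x‖ + ‖pdm α ψ x‖ := by
      rw [hdecomp α x hx]; exact norm_add_le _ _
    have tmono : h ^ mOrder α * ‖pdm α φ x‖ / (mFact α : ℝ) ^ s ≤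
        h ^ mOrder α * ‖pdm α (φ - ψ) x‖ / (mFact α : ℝ) ^ s +
        h ^ mOrder α * ‖pdm α ψ x‖ / (mFact α : ℝ) ^ s := by
      rw [← add_div, ← mul_add]
      gcongr
    have t2 : C * (1/2 : ℝ) ^ mOrder α ≤ ε/2 := by
      have hm : (1/2 : ℝ) ^ mOrder α ≤ (1/2 : ℝ) ^ n := by
        apply pow_le_pow_of_le_one (by norm_num) (by norm_num)
        omega
      have : C * (1/2 : ℝ) ^ mOrder α ≤ (C+1) * (1/2 : ℝ) ^ n := by
        apply mul_le_mul (by linarith) hm (by positivity) (by linarith)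
      have h2 : (C+1) * (1/2 : ℝ) ^ n ≤ (C+1) * ((ε/2)/(C+1)) := by
        apply mul_le_mul_of_nonneg_left hn.le (by linarith)
      have h3 : (C+1) * ((ε/2)/(C+1)) = ε/2 := by
        field_simp
      linarith
    linarith [hdiff α x hx, hψbd α x, tmono]
end
end

section
/- Fix s>1, an open set U ⊆ ℝ^d and 1≤p≤∞. A smooth function φ on U satisfying ‖φ‖_{D^s_{L^p,h}(U)} < ∞ for every h>0 lies in the closure of D^{(s)}(U) with respect to the family of norms {‖·‖_{D^s_{L^p,h}(U)} : h>0} (the topology of B^{(s)}_{L^p}(U)) if and only if for every h>0, φ lies in the closure of D^{(s)}(U) in the single Banach space D^s_{L^p,h}(U). In particular, D^{(s)}_{L^p}(U) coincides, as a topological vector space, with the reduced projective limit of the spaces D^{(s)}_{L^p,h}(U) as h→∞. -/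
open MeasureTheory Filter Set
open scoped BigOperators ENNReal NNReal Topology

noncomputable section

variable {d : ℕ} {F : Type*} [NormedAddCommGroup F] [NormedSpace ℝ F]

lemma pdPow_zero_fun (i : Fin d) (n : ℕ) :
    pdPow i n (0 : (Fin d → ℝ) → F) = 0 := by
  induction n with
  | zero => rfl
  | succ n ih =>
    show pd i (pdPow i n (0 : (Fin d → ℝ) → F)) = 0
    rw [ih]
    funext x
    simp only [pd, Pi.zero_apply]
    rw [show (0 : (Fin d → ℝ) → F) = fun _ => (0:F) from rfl, fderiv_const_apply]
    simp

lemma pdm_zero_fun (α : Fin d → ℕ) : pdm α (0 : (Fin d → ℝ) → F) = 0 := by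
  unfold pdm
  induction (List.finRange d) with
  | nil => rfl
  | cons i l ih => simp [List.foldr_cons, ih, pdPow_zero_fun]

lemma isGevreyTest_zero (s : ℝ) (U : Set (Fin d → ℝ)) :
    IsGevreyTest s U (0 : (Fin d → ℝ) → F) := by
  refine ⟨contDiff_const, ?_, ?_, ?_⟩
  · rw [HasCompactSupport]
    simp [tsupport, Function.support]
  · simp [tsupport, Function.support]
  · intro h hh
    refine ⟨0, fun α x => ?_⟩
    rw [pdm_zero_fun]
    simp

lemma seqLpNorm_mono {ι : Type*} (p : ℝ≥0∞) {w v : ι → ℝ≥0∞} (hwv : ∀ i, w i ≤ v i) :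
    seqLpNorm p w ≤ seqLpNorm p v := by
  unfold seqLpNorm
  split
  · exact iSup_mono hwv
  · exact ENNReal.rpow_le_rpow
      (ENNReal.tsum_le_tsum fun i => ENNReal.rpow_le_rpow (hwv i) ENNReal.toReal_nonneg)
      (by positivity)

lemma gNorm_mono (s : ℝ) {h h' : ℝ} (hh : 0 ≤ h) (hle : h ≤ h') (p : ℝ≥0∞)
    (U : Set (Fin d → ℝ)) (f : (Fin d → ℝ) → F) :
    gNorm s h p U f ≤ gNorm s h' p U f := by
  refine seqLpNorm_mono p fun α => ?_
  refine mul_le_mul_left (ENNReal.ofReal_le_ofReal ?_) _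
  gcongr

/-- Fix `s > 1`, an open set `U ⊆ ℝ^d` and `1 ≤ p ≤ ∞`. A smooth function
`φ` on `U` with `‖φ‖_{D^s_{L^p,h}(U)} < ∞` for every `h > 0` lies in the closure of
`D^{(s)}(U)` with respect to the whole family of norms (the topology of `B^{(s)}_{L^p}(U)`,
whose basic neighbourhoods are finite intersections of norm-balls) if and only if for every
`h > 0` it lies in the closure of `D^{(s)}(U)` in the single Banach space `D^s_{L^p,h}(U)`.
In particular `D^{(s)}_{L^p}(U)` coincides with the reduced projective limit of the spaces
`D^{(s)}_{L^p,h}(U)` as `h → ∞`. -/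
theorem statement_9 {d : ℕ} (s : ℝ) (hs : 1 < s)
    (U : Set (Fin d → ℝ)) (hU : IsOpen U)
    (p : ℝ≥0∞) (hp : 1 ≤ p)
    (φ : (Fin d → ℝ) → ℂ) (hsmooth : ContDiffOn ℝ (⊤ : ℕ∞) φ U)
    (hfin : ∀ h : ℝ, 0 < h → gNorm s h p U φ < ⊤) :
    (∀ ε : ℝ, 0 < ε → ∀ H : Finset ℝ, (∀ h ∈ H, (0 : ℝ) < h) →
        ∃ ψ : (Fin d → ℝ) → ℂ, IsGevreyTest s U ψ ∧
          ∀ h ∈ H, gNorm s h p U (φ - ψ) < ENNReal.ofReal ε) ↔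
    (∀ h : ℝ, 0 < h → MemD s h p U φ) := by
  constructor
  · intro hyp h hh
    refine ⟨hsmooth, hfin h hh, fun ε hε => ?_⟩
    obtain ⟨ψ, hψ, hb⟩ := hyp ε hε {h} (by simpa using hh)
    exact ⟨ψ, hψ, hb h (Finset.mem_singleton_self h)⟩
  · intro hyp ε hε H hH
    rcases H.eq_empty_or_nonempty with rfl | hne
    · exact ⟨0, isGevreyTest_zero s U, fun h hh => absurd hh (by simp)⟩
    · set h₀ := H.max' hne with hh₀
      have h₀pos : 0 < h₀ := hH _ (H.max'_mem hne)
      obtain ⟨ψ, hψ, hb⟩ := (hyp h₀ h₀pos).2.2 ε hε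
      refine ⟨ψ, hψ, fun h hmem => ?_⟩
      exact lt_of_le_of_lt
        (gNorm_mono s (hH h hmem).le (Finset.le_max' H h hmem) p U (φ - ψ)) hb
end
end
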